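/- Let n ≥ 1 be an integer and let σ, β1, β2 be real numbers with 0 ≤ σ < n, β1 > n and β2 > n. Then there exists a constant C = C(n,σ,β1,β2) > 0 such that for every τ ∈ ℝⁿ the double integral ∫_{ℝⁿ}∫_{ℝⁿ} |x−y|^{−σ} ⟨x−τ⟩^{−β1} ⟨y⟩^{−β2} dx dy is finite and satisfies ∫_{ℝⁿ}∫_{ℝⁿ} |x−y|^{−σ} ⟨x−τ⟩^{−β1} ⟨y⟩^{−β2} dx dy ≤ C ⟨τ⟩^{−σ}. -/

import Mathlib

open MeasureTheory Set Metric
open scoped ENNReal NNReal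

noncomputable section AuxWDIB
private lemma wdib_sqrt_rpow_neg {x : ℝ} (hx : 0 ≤ x) (β : ℝ) :
    Real.sqrt x ^ (-β) = x ^ (-β / 2) := by
  rw [Real.sqrt_eq_rpow, ← Real.rpow_mul hx]
  congr 1
  ring

private lemma wdib_jb_one_le {n : ℕ} (x : EuclideanSpace ℝ (Fin n)) :
    1 ≤ Real.sqrt (1 + ‖x‖ ^ 2) := by
  rw [Real.one_le_sqrt]
  nlinarith [sq_nonneg ‖x‖]

private lemma wdib_jb_pos {n : ℕ} (x : EuclideanSpace ℝ (Fin n)) :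
    0 < Real.sqrt (1 + ‖x‖ ^ 2) :=
  lt_of_lt_of_le one_pos (wdib_jb_one_le x)

private lemma wdib_norm_le_jb {n : ℕ} (x : EuclideanSpace ℝ (Fin n)) :
    ‖x‖ ≤ Real.sqrt (1 + ‖x‖ ^ 2) := by
  rw [Real.le_sqrt (norm_nonneg x) (by positivity)]
  nlinarith [sq_nonneg ‖x‖]

/-- The key estimate `∫_{B(0,R)} ‖z‖^{-σ} dz ≤ c R^{n-σ}`, proven by dyadic shells. -/
private lemma wdib_ball_bound {n : ℕ} (hn : 1 ≤ n) {σ : ℝ} (hσ0 : 0 ≤ σ) (hσn : σ < n) :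
    ∃ c : ℝ≥0∞, c ≠ ∞ ∧ ∀ R : ℝ, 0 < R →
      ∫⁻ z in ball (0 : EuclideanSpace ℝ (Fin n)) R, ENNReal.ofReal (‖z‖ ^ (-σ)) ≤
        ENNReal.ofReal (R ^ ((n:ℝ) - σ)) * c := by
  haveI : Nonempty (Fin n) := Fin.pos_iff_nonempty.1 hn
  set vB := volume (ball (0 : EuclideanSpace ℝ (Fin n)) 1) with hvB
  have hvB_lt : vB < ∞ := measure_ball_lt_top
  set r0 : ℝ≥0∞ := ENNReal.ofReal ((1/2 : ℝ) ^ ((n:ℝ) - σ)) with hr0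
  have hr0_lt : r0 < 1 := by
    rw [hr0, ENNReal.ofReal_lt_one]
    exact Real.rpow_lt_one (by norm_num) (by norm_num) (by linarith)
  have hgeom : (1 - r0)⁻¹ ≠ ∞ := by
    rw [ENNReal.inv_ne_top]
    exact (tsub_pos_of_lt hr0_lt).ne'
  refine ⟨ENNReal.ofReal ((2:ℝ) ^ σ) * vB * (1 - r0)⁻¹, ?_, ?_⟩
  · exact ENNReal.mul_ne_top (ENNReal.mul_ne_top ENNReal.ofReal_ne_top hvB_lt.ne) hgeom
  intro R hR
  -- dyadic shells
  set A : ℕ → Set (EuclideanSpace ℝ (Fin n)) := fun k =>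
    {z | R * (1/2 : ℝ) ^ (k+1) < ‖z‖} ∩ closedBall 0 (R * (1/2 : ℝ) ^ k) with hA
  have hcover : ball (0 : EuclideanSpace ℝ (Fin n)) R \ {0} ⊆ ⋃ k, A k := by
    intro z hz
    have hz0 : z ≠ 0 := fun h => hz.2 (by simp [h])
    have hznorm : 0 < ‖z‖ := norm_pos_iff.2 hz0
    have hzR : ‖z‖ < R := by simpa using mem_ball_zero_iff.1 hz.1
    have hex : ∃ k : ℕ, R * (1/2 : ℝ) ^ k < ‖z‖ := by
      obtain ⟨m, hm⟩ := exists_pow_lt_of_lt_one (div_pos hznorm hR) (by norm_num : (1/2 : ℝ) < 1)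
      exact ⟨m, by rwa [mul_comm, ← lt_div_iff₀ hR]⟩
    have hkspec : R * (1/2 : ℝ) ^ (Nat.find hex) < ‖z‖ := Nat.find_spec hex
    have hkpos : Nat.find hex ≠ 0 := by
      intro h
      rw [h] at hkspec
      simp at hkspec
      linarith
    obtain ⟨k', hk'⟩ := Nat.exists_eq_succ_of_ne_zero hkpos
    have hmin : ¬ (R * (1/2 : ℝ) ^ k' < ‖z‖) :=
      Nat.find_min hex (by rw [hk']; exact Nat.lt_succ_self k')
    rw [hk'] at hkspec
    refine mem_iUnion.2 ⟨k', ⟨hkspec, ?_⟩⟩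
    rw [mem_closedBall_zero_iff]
    linarith
  -- per-shell bound
  have hshell : ∀ k : ℕ, ∫⁻ z in A k, ENNReal.ofReal (‖z‖ ^ (-σ)) ≤
      (ENNReal.ofReal (R ^ ((n:ℝ) - σ)) * (ENNReal.ofReal ((2:ℝ) ^ σ) * vB)) * r0 ^ k := by
    intro k
    have hu : (0:ℝ) < (1/2 : ℝ) ^ k := by positivity
    have hRu : (0:ℝ) < R * (1/2 : ℝ) ^ k := by positivity
    have h1 : ∫⁻ z in A k, ENNReal.ofReal (‖z‖ ^ (-σ)) ≤
        ENNReal.ofReal ((R * (1/2 : ℝ) ^ (k+1)) ^ (-σ)) * volume (A k) := by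
      rw [← setLIntegral_const]
      refine setLIntegral_mono measurable_const fun z hz => ?_
      refine ENNReal.ofReal_le_ofReal ?_
      exact Real.rpow_le_rpow_of_nonpos (by positivity) hz.1.le (by linarith)
    have h2 : volume (A k) ≤ ENNReal.ofReal ((R * (1/2 : ℝ) ^ k) ^ n) * vB := by
      calc volume (A k) ≤ volume (closedBall (0 : EuclideanSpace ℝ (Fin n)) (R * (1/2 : ℝ) ^ k)) :=
            measure_mono inter_subset_right
        _ = ENNReal.ofReal ((R * (1/2 : ℝ) ^ k) ^ n) * vB := by
            rw [Measure.addHaar_closedBall _ _ hRu.le, finrank_euclideanSpace_fin]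
    calc ∫⁻ z in A k, ENNReal.ofReal (‖z‖ ^ (-σ))
        ≤ ENNReal.ofReal ((R * (1/2 : ℝ) ^ (k+1)) ^ (-σ)) *
            (ENNReal.ofReal ((R * (1/2 : ℝ) ^ k) ^ n) * vB) := by
          exact le_trans h1 (by gcongr)
      _ = ENNReal.ofReal ((R * (1/2 : ℝ) ^ (k+1)) ^ (-σ) * (R * (1/2 : ℝ) ^ k) ^ n) * vB := by
          rw [ENNReal.ofReal_mul (by positivity), mul_assoc]
      _ ≤ (ENNReal.ofReal (R ^ ((n:ℝ) - σ)) * (ENNReal.ofReal ((2:ℝ) ^ σ) * vB)) * r0 ^ k := by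
          have key : (R * (1/2 : ℝ) ^ (k+1)) ^ (-σ) * (R * (1/2 : ℝ) ^ k) ^ n =
              R ^ ((n:ℝ) - σ) * ((2:ℝ) ^ σ * ((1/2 : ℝ) ^ ((n:ℝ) - σ)) ^ k) := by
            have e1 : (R * (1/2 : ℝ) ^ (k+1)) ^ (-σ) =
                (R * (1/2 : ℝ) ^ k) ^ (-σ) * (2:ℝ) ^ σ := by
              rw [pow_succ, ← mul_assoc, Real.mul_rpow (by positivity) (by norm_num)]
              congr 1
              rw [one_div, Real.inv_rpow (by norm_num), Real.rpow_neg (by norm_num), inv_inv]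
            have e2 : (R * (1/2 : ℝ) ^ k) ^ n = (R * (1/2 : ℝ) ^ k) ^ ((n:ℝ)) := by
              rw [Real.rpow_natCast]
            have e3 : (R * (1/2 : ℝ) ^ k) ^ (-σ) * (R * (1/2 : ℝ) ^ k) ^ ((n:ℝ)) =
                (R * (1/2 : ℝ) ^ k) ^ ((n:ℝ) - σ) := by
              rw [← Real.rpow_add hRu]
              congr 1
              ring
            have e4 : (R * (1/2 : ℝ) ^ k) ^ ((n:ℝ) - σ) =
                R ^ ((n:ℝ) - σ) * ((1/2 : ℝ) ^ ((n:ℝ) - σ)) ^ k := by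
              rw [Real.mul_rpow hR.le hu.le]
              congr 1
              rw [← Real.rpow_natCast ((1/2:ℝ)) k, ← Real.rpow_mul (by norm_num),
                ← Real.rpow_natCast ((1/2:ℝ) ^ ((n:ℝ) - σ)) k, ← Real.rpow_mul (by norm_num),
                mul_comm]
            calc (R * (1/2 : ℝ) ^ (k+1)) ^ (-σ) * (R * (1/2 : ℝ) ^ k) ^ n
                = (R * (1/2 : ℝ) ^ k) ^ (-σ) * (2:ℝ) ^ σ * (R * (1/2 : ℝ) ^ k) ^ ((n:ℝ)) := by
                  rw [e1, e2]
              _ = (R * (1/2 : ℝ) ^ k) ^ ((n:ℝ) - σ) * (2:ℝ) ^ σ := by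
                  rw [mul_right_comm, e3]
              _ = R ^ ((n:ℝ) - σ) * ((2:ℝ) ^ σ * ((1/2 : ℝ) ^ ((n:ℝ) - σ)) ^ k) := by
                  rw [e4]; ring
          rw [key, ENNReal.ofReal_mul (by positivity), ENNReal.ofReal_mul (by positivity),
            ENNReal.ofReal_pow (by positivity), ← hr0]
          ring_nf
          exact le_rfl
  have h0 : volume (ball (0 : EuclideanSpace ℝ (Fin n)) R ∩ {0}) = 0 :=
    measure_mono_null inter_subset_right (measure_singleton 0)
  calc ∫⁻ z in ball (0 : EuclideanSpace ℝ (Fin n)) R, ENNReal.ofReal (‖z‖ ^ (-σ))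
      = ∫⁻ z in ball (0 : EuclideanSpace ℝ (Fin n)) R \ {0}, ENNReal.ofReal (‖z‖ ^ (-σ)) := by
        rw [Measure.restrict_congr_set (diff_ae_eq_self.2 h0)]
    _ ≤ ∫⁻ z in ⋃ k, A k, ENNReal.ofReal (‖z‖ ^ (-σ)) := lintegral_mono_set hcover
    _ ≤ ∑' k, ∫⁻ z in A k, ENNReal.ofReal (‖z‖ ^ (-σ)) := lintegral_iUnion_le _ _
    _ ≤ ∑' k, (ENNReal.ofReal (R ^ ((n:ℝ) - σ)) * (ENNReal.ofReal ((2:ℝ) ^ σ) * vB)) * r0 ^ k :=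
        ENNReal.tsum_le_tsum hshell
    _ = (ENNReal.ofReal (R ^ ((n:ℝ) - σ)) * (ENNReal.ofReal ((2:ℝ) ^ σ) * vB)) * ∑' k, r0 ^ k :=
        ENNReal.tsum_mul_left
    _ = ENNReal.ofReal (R ^ ((n:ℝ) - σ)) * (ENNReal.ofReal ((2:ℝ) ^ σ) * vB * (1 - r0)⁻¹) := by
        rw [ENNReal.tsum_geometric]
        ring


private lemma wdib_jb_finite {n : ℕ} {β : ℝ} (hβ : (n:ℝ) < β) :
    ∫⁻ y : EuclideanSpace ℝ (Fin n), ENNReal.ofReal (Real.sqrt (1 + ‖y‖ ^ 2) ^ (-β)) < ∞ := by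
  have hfin : (Module.finrank ℝ (EuclideanSpace ℝ (Fin n)) : ℝ) < β := by
    rw [finrank_euclideanSpace_fin]; exact hβ
  have hint : Integrable (fun y : EuclideanSpace ℝ (Fin n) => ((1:ℝ) + ‖y‖ ^ 2) ^ (-β / 2)) :=
    integrable_rpow_neg_one_add_norm_sq hfin
  have h := hint.lintegral_lt_top
  have heq : ∀ y : EuclideanSpace ℝ (Fin n),
      Real.sqrt (1 + ‖y‖ ^ 2) ^ (-β) = ((1:ℝ) + ‖y‖ ^ 2) ^ (-β / 2) := fun y => by
    rw [Real.sqrt_eq_rpow, ← Real.rpow_mul (by positivity)]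
    congr 1
    ring
  simpa only [heq] using h

private lemma wdib_lemA {n : ℕ} (hn : 1 ≤ n) {σ β : ℝ} (hσ0 : 0 ≤ σ) (hσn : σ < n)
    (hβ : (n:ℝ) < β) :
    ∃ C : ℝ≥0∞, C ≠ ∞ ∧ ∀ a : EuclideanSpace ℝ (Fin n),
      ∫⁻ y : EuclideanSpace ℝ (Fin n),
        ENNReal.ofReal (‖y - a‖ ^ (-σ) * Real.sqrt (1 + ‖y‖ ^ 2) ^ (-β)) ≤
        C * ENNReal.ofReal (Real.sqrt (1 + ‖a‖ ^ 2) ^ (-σ)) := by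
  obtain ⟨c, hc, hball⟩ := wdib_ball_bound hn hσ0 hσn
  set Kβ : ℝ≥0∞ := ∫⁻ y : EuclideanSpace ℝ (Fin n),
    ENNReal.ofReal (Real.sqrt (1 + ‖y‖ ^ 2) ^ (-β)) with hKβ_def
  have hKβ : Kβ ≠ ∞ := (wdib_jb_finite hβ).ne
  have hβ0 : 0 < β := lt_of_le_of_lt (by positivity) hβ
  refine ⟨ENNReal.ofReal ((4:ℝ) ^ β * 2 ^ (σ - (n:ℝ))) * c + ENNReal.ofReal ((2:ℝ) ^ σ) * Kβ,
    ENNReal.add_ne_top.2 ⟨ENNReal.mul_ne_top ENNReal.ofReal_ne_top hc,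
      ENNReal.mul_ne_top ENNReal.ofReal_ne_top hKβ⟩, ?_⟩
  intro a
  set A : ℝ := Real.sqrt (1 + ‖a‖ ^ 2) with hAdef
  have hA1 : 1 ≤ A := wdib_jb_one_le a
  have hA0 : 0 < A := lt_of_lt_of_le one_pos hA1
  have hAle : A ≤ 1 + ‖a‖ := sqrt_one_add_norm_sq_le a
  set S : Set (EuclideanSpace ℝ (Fin n)) := ball a (A / 2) with hS
  set f : EuclideanSpace ℝ (Fin n) → ℝ≥0∞ := fun y =>
    ENNReal.ofReal (‖y - a‖ ^ (-σ) * Real.sqrt (1 + ‖y‖ ^ 2) ^ (-β)) with hf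
  -- Part 1 : on S
  have hpart1 : ∫⁻ y in S, f y ≤
      (ENNReal.ofReal ((4:ℝ) ^ β * 2 ^ (σ - (n:ℝ))) * c) * ENNReal.ofReal (A ^ (-σ)) := by
    have hstep1 : ∫⁻ y in S, f y ≤
        ∫⁻ y in S, ENNReal.ofReal ((A/4) ^ (-β)) * ENNReal.ofReal (‖y - a‖ ^ (-σ)) := by
      refine setLIntegral_mono (by fun_prop) fun y hy => ?_
      have hdist : ‖y - a‖ < A / 2 := by
        simpa [dist_eq_norm] using (mem_ball.1 hy)
      have hjb : A / 4 ≤ Real.sqrt (1 + ‖y‖ ^ 2) := by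
        have h1 : ‖a‖ ≤ ‖y‖ + ‖y - a‖ := by
          calc ‖a‖ = ‖y - (y - a)‖ := by congr 1; abel
            _ ≤ ‖y‖ + ‖y - a‖ := norm_sub_le _ _
        have h2 := wdib_jb_one_le y
        have h3 := wdib_norm_le_jb y
        nlinarith
      show ENNReal.ofReal (‖y - a‖ ^ (-σ) * Real.sqrt (1 + ‖y‖ ^ 2) ^ (-β)) ≤ _
      rw [← ENNReal.ofReal_mul (by positivity)]
      refine ENNReal.ofReal_le_ofReal ?_
      rw [mul_comm ((A/4) ^ (-β))]
      refine mul_le_mul_of_nonneg_left ?_ (by positivity)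
      exact Real.rpow_le_rpow_of_nonpos (by positivity) hjb (by linarith)
    have hstep2 : ∫⁻ y in S, ENNReal.ofReal ((A/4) ^ (-β)) * ENNReal.ofReal (‖y - a‖ ^ (-σ)) =
        ENNReal.ofReal ((A/4) ^ (-β)) * ∫⁻ y in S, ENNReal.ofReal (‖y - a‖ ^ (-σ)) :=
      lintegral_const_mul' _ _ ENNReal.ofReal_ne_top
    have htrans : ∫⁻ y in S, ENNReal.ofReal (‖y - a‖ ^ (-σ)) =
        ∫⁻ z in ball (0 : EuclideanSpace ℝ (Fin n)) (A/2), ENNReal.ofReal (‖z‖ ^ (-σ)) := by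
      rw [← lintegral_indicator measurableSet_ball, ← lintegral_indicator measurableSet_ball]
      have hpt : ∀ y : EuclideanSpace ℝ (Fin n),
          S.indicator (fun y => ENNReal.ofReal (‖y - a‖ ^ (-σ))) y =
          ((ball (0 : EuclideanSpace ℝ (Fin n)) (A/2)).indicator
            (fun z => ENNReal.ofReal (‖z‖ ^ (-σ)))) (y + -a) := by
        intro y
        by_cases h : y ∈ S
        · rw [indicator_of_mem h, indicator_of_mem]
          · rw [sub_eq_add_neg]
          · rw [mem_ball_zero_iff, ← sub_eq_add_neg]
            simpa [dist_eq_norm] using (mem_ball.1 h)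
        · rw [indicator_of_notMem h, indicator_of_notMem]
          intro hmem
          refine h (mem_ball.2 ?_)
          rw [mem_ball_zero_iff, ← sub_eq_add_neg] at hmem
          simpa [dist_eq_norm] using hmem
      refine (lintegral_congr hpt).trans ?_
      exact lintegral_add_right_eq_self _ (-a)
    calc ∫⁻ y in S, f y ≤
        ENNReal.ofReal ((A/4) ^ (-β)) * ∫⁻ y in S, ENNReal.ofReal (‖y - a‖ ^ (-σ)) := by
          rw [← hstep2]; exact hstep1
      _ ≤ ENNReal.ofReal ((A/4) ^ (-β)) * (ENNReal.ofReal ((A/2) ^ ((n:ℝ) - σ)) * c) := by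
          rw [htrans]; exact mul_le_mul_right (hball (A/2) (by linarith)) _
      _ = ENNReal.ofReal ((A/4) ^ (-β) * (A/2) ^ ((n:ℝ) - σ)) * c := by
          rw [ENNReal.ofReal_mul (by positivity), mul_assoc]
      _ ≤ ENNReal.ofReal ((4:ℝ) ^ β * 2 ^ (σ - (n:ℝ)) * A ^ (-σ)) * c := by
          refine mul_le_mul_left (ENNReal.ofReal_le_ofReal ?_) _
          -- real arithmetic: (A/4)^(-β) * (A/2)^(n-σ) ≤ 4^β * 2^(σ-n) * A^(-σ)
          have e4 : (A/4 : ℝ) ^ (-β) = A ^ (-β) * (4:ℝ) ^ β := by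
            rw [div_eq_mul_inv, Real.mul_rpow hA0.le (by norm_num),
              Real.inv_rpow (by norm_num : (0:ℝ) ≤ 4),
              Real.rpow_neg (by norm_num : (0:ℝ) ≤ 4) β, inv_inv]
          have e2 : (A/2 : ℝ) ^ ((n:ℝ) - σ) = A ^ ((n:ℝ) - σ) * (2:ℝ) ^ (σ - (n:ℝ)) := by
            rw [div_eq_mul_inv, Real.mul_rpow hA0.le (by norm_num),
              Real.inv_rpow (by norm_num : (0:ℝ) ≤ 2),
              ← Real.rpow_neg (by norm_num : (0:ℝ) ≤ 2) ((n:ℝ) - σ)]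
            congr 1
            ring
          rw [e4, e2]
          have eA : A ^ (-β) * A ^ ((n:ℝ) - σ) = A ^ ((n:ℝ) - σ - β) := by
            rw [← Real.rpow_add hA0]; congr 1; ring
          calc A ^ (-β) * (4:ℝ) ^ β * (A ^ ((n:ℝ) - σ) * (2:ℝ) ^ (σ - (n:ℝ)))
              = (4:ℝ) ^ β * 2 ^ (σ - (n:ℝ)) * (A ^ (-β) * A ^ ((n:ℝ) - σ)) := by ring
            _ = (4:ℝ) ^ β * 2 ^ (σ - (n:ℝ)) * A ^ ((n:ℝ) - σ - β) := by rw [eA]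
            _ ≤ (4:ℝ) ^ β * 2 ^ (σ - (n:ℝ)) * A ^ (-σ) := by
                refine mul_le_mul_of_nonneg_left ?_ (by positivity)
                exact Real.rpow_le_rpow_of_exponent_le hA1 (by linarith)
            _ = (4:ℝ) ^ β * 2 ^ (σ - (n:ℝ)) * A ^ (-σ) := rfl
      _ = (ENNReal.ofReal ((4:ℝ) ^ β * 2 ^ (σ - (n:ℝ))) * c) * ENNReal.ofReal (A ^ (-σ)) := by
          rw [ENNReal.ofReal_mul (by positivity)]
          ring
  -- Part 2 : on Sᶜ
  have hpart2 : ∫⁻ y in Sᶜ, f y ≤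
      (ENNReal.ofReal ((2:ℝ) ^ σ) * Kβ) * ENNReal.ofReal (A ^ (-σ)) := by
    have hstep1 : ∫⁻ y in Sᶜ, f y ≤
        ∫⁻ y in Sᶜ, ENNReal.ofReal ((A/2) ^ (-σ)) *
          ENNReal.ofReal (Real.sqrt (1 + ‖y‖ ^ 2) ^ (-β)) := by
      refine setLIntegral_mono (by fun_prop) fun y hy => ?_
      have hdist : A / 2 ≤ ‖y - a‖ := by
        have := mem_ball.not.1 hy
        push_neg at this
        simpa [dist_eq_norm] using this
      show ENNReal.ofReal (‖y - a‖ ^ (-σ) * Real.sqrt (1 + ‖y‖ ^ 2) ^ (-β)) ≤ _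
      rw [ENNReal.ofReal_mul (by positivity)]
      refine mul_le_mul_left (ENNReal.ofReal_le_ofReal ?_) _
      exact Real.rpow_le_rpow_of_nonpos (by linarith) hdist (by linarith)
    have hstep2 : ∫⁻ y in Sᶜ, ENNReal.ofReal ((A/2) ^ (-σ)) *
          ENNReal.ofReal (Real.sqrt (1 + ‖y‖ ^ 2) ^ (-β)) ≤
        ENNReal.ofReal ((A/2) ^ (-σ)) * Kβ := by
      rw [lintegral_const_mul' _ _ ENNReal.ofReal_ne_top]
      refine mul_le_mul_right ?_ _
      rw [hKβ_def]
      exact le_trans (lintegral_mono_set (subset_univ _)) (by rw [Measure.restrict_univ])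
    have e2 : (A/2 : ℝ) ^ (-σ) = A ^ (-σ) * (2:ℝ) ^ σ := by
      rw [div_eq_mul_inv, Real.mul_rpow hA0.le (by norm_num)]
      congr 1
      rw [Real.inv_rpow (by norm_num : (0:ℝ) ≤ 2),
        Real.rpow_neg (by norm_num : (0:ℝ) ≤ 2) σ, inv_inv]
    calc ∫⁻ y in Sᶜ, f y ≤ ENNReal.ofReal ((A/2) ^ (-σ)) * Kβ := le_trans hstep1 hstep2
      _ = (ENNReal.ofReal ((2:ℝ) ^ σ) * Kβ) * ENNReal.ofReal (A ^ (-σ)) := by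
          rw [e2, ENNReal.ofReal_mul (by positivity)]
          ring
  calc ∫⁻ y, f y = (∫⁻ y in S, f y) + ∫⁻ y in Sᶜ, f y := (lintegral_add_compl f measurableSet_ball).symm
    _ ≤ (ENNReal.ofReal ((4:ℝ) ^ β * 2 ^ (σ - (n:ℝ))) * c) * ENNReal.ofReal (A ^ (-σ)) +
        (ENNReal.ofReal ((2:ℝ) ^ σ) * Kβ) * ENNReal.ofReal (A ^ (-σ)) := add_le_add hpart1 hpart2
    _ = (ENNReal.ofReal ((4:ℝ) ^ β * 2 ^ (σ - (n:ℝ))) * c + ENNReal.ofReal ((2:ℝ) ^ σ) * Kβ) *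
        ENNReal.ofReal (A ^ (-σ)) := by rw [add_mul]

private lemma wdib_lemB {n : ℕ} (hn : 1 ≤ n) {σ β : ℝ} (hσ0 : 0 ≤ σ) (hσn : σ < n)
    (hβ : (n:ℝ) < β) :
    ∃ C : ℝ≥0∞, C ≠ ∞ ∧ ∀ τ : EuclideanSpace ℝ (Fin n),
      ∫⁻ x : EuclideanSpace ℝ (Fin n),
        ENNReal.ofReal (Real.sqrt (1 + ‖x‖ ^ 2) ^ (-σ) * Real.sqrt (1 + ‖x - τ‖ ^ 2) ^ (-β)) ≤
        C * ENNReal.ofReal (Real.sqrt (1 + ‖τ‖ ^ 2) ^ (-σ)) := by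
  haveI : Nonempty (Fin n) := Fin.pos_iff_nonempty.1 hn
  obtain ⟨C, hC, hA⟩ := wdib_lemA hn hσ0 hσn hβ
  refine ⟨C, hC, fun τ => ?_⟩
  haveI : Nontrivial (EuclideanSpace ℝ (Fin n)) := inferInstance
  have hae : ∀ᵐ x : EuclideanSpace ℝ (Fin n), x ≠ 0 := by
    have h0 : (volume : Measure (EuclideanSpace ℝ (Fin n))) {0} = 0 := measure_singleton 0
    rw [ae_iff]
    convert h0 using 2
    ext x
    simp
  have hmono : ∫⁻ x : EuclideanSpace ℝ (Fin n),
      ENNReal.ofReal (Real.sqrt (1 + ‖x‖ ^ 2) ^ (-σ) * Real.sqrt (1 + ‖x - τ‖ ^ 2) ^ (-β)) ≤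
      ∫⁻ x : EuclideanSpace ℝ (Fin n),
      ENNReal.ofReal (‖x‖ ^ (-σ) * Real.sqrt (1 + ‖x - τ‖ ^ 2) ^ (-β)) := by
    refine lintegral_mono_ae (hae.mono fun x hx => ?_)
    refine ENNReal.ofReal_le_ofReal (mul_le_mul_of_nonneg_right ?_ (by positivity))
    exact Real.rpow_le_rpow_of_nonpos (norm_pos_iff.2 hx) (wdib_norm_le_jb x) (by linarith)
  have htrans : ∫⁻ x : EuclideanSpace ℝ (Fin n),
      ENNReal.ofReal (‖x‖ ^ (-σ) * Real.sqrt (1 + ‖x - τ‖ ^ 2) ^ (-β)) =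
      ∫⁻ y : EuclideanSpace ℝ (Fin n),
      ENNReal.ofReal (‖y - (-τ)‖ ^ (-σ) * Real.sqrt (1 + ‖y‖ ^ 2) ^ (-β)) := by
    rw [← lintegral_add_right_eq_self (fun x : EuclideanSpace ℝ (Fin n) =>
      ENNReal.ofReal (‖x‖ ^ (-σ) * Real.sqrt (1 + ‖x - τ‖ ^ 2) ^ (-β))) τ]
    congr 1
    funext y
    rw [add_sub_cancel_right, sub_neg_eq_add]
  calc ∫⁻ x : EuclideanSpace ℝ (Fin n),
      ENNReal.ofReal (Real.sqrt (1 + ‖x‖ ^ 2) ^ (-σ) * Real.sqrt (1 + ‖x - τ‖ ^ 2) ^ (-β))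
      ≤ ∫⁻ y : EuclideanSpace ℝ (Fin n),
        ENNReal.ofReal (‖y - (-τ)‖ ^ (-σ) * Real.sqrt (1 + ‖y‖ ^ 2) ^ (-β)) := by
        rw [← htrans]; exact hmono
    _ ≤ C * ENNReal.ofReal (Real.sqrt (1 + ‖(-τ : EuclideanSpace ℝ (Fin n))‖ ^ 2) ^ (-σ)) := hA (-τ)
    _ = C * ENNReal.ofReal (Real.sqrt (1 + ‖τ‖ ^ 2) ^ (-σ)) := by rw [norm_neg]

end AuxWDIB

/-- Lemma 2.7, second estimate: the weighted double-integral bound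
    `∫∫ |x-y|^{-σ} ⟨x-τ⟩^{-β₁} ⟨y⟩^{-β₂} dx dy ≤ C ⟨τ⟩^{-σ}`.
    Here `⟨x⟩ = (1+|x|²)^{1/2}` is the Japanese bracket. -/
theorem weighted_double_integral_bound
    (n : ℕ) (hn : 1 ≤ n) (σ β₁ β₂ : ℝ)
    (hσ0 : 0 ≤ σ) (hσn : σ < n) (hβ₁ : (n:ℝ) < β₁) (hβ₂ : (n:ℝ) < β₂) :
    ∃ C : ℝ, 0 < C ∧
      ∀ τ : EuclideanSpace ℝ (Fin n),
        Integrable (fun p : EuclideanSpace ℝ (Fin n) × EuclideanSpace ℝ (Fin n) =>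
          ‖p.1 - p.2‖ ^ (-σ) * Real.sqrt (1 + ‖p.1 - τ‖^2) ^ (-β₁) *
            Real.sqrt (1 + ‖p.2‖^2) ^ (-β₂)) ∧
        (∫ p : EuclideanSpace ℝ (Fin n) × EuclideanSpace ℝ (Fin n),
            ‖p.1 - p.2‖ ^ (-σ) * Real.sqrt (1 + ‖p.1 - τ‖^2) ^ (-β₁) *
              Real.sqrt (1 + ‖p.2‖^2) ^ (-β₂)) ≤
          C * Real.sqrt (1 + ‖τ‖^2) ^ (-σ) := by
  obtain ⟨CA, hCA, hA⟩ := wdib_lemA hn hσ0 hσn hβ₂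
  obtain ⟨CB, hCB, hB⟩ := wdib_lemB hn hσ0 hσn hβ₁
  refine ⟨(CA * CB).toReal + 1, by positivity, fun τ => ?_⟩
  set F : EuclideanSpace ℝ (Fin n) × EuclideanSpace ℝ (Fin n) → ℝ := fun p =>
    ‖p.1 - p.2‖ ^ (-σ) * Real.sqrt (1 + ‖p.1 - τ‖^2) ^ (-β₁) *
      Real.sqrt (1 + ‖p.2‖^2) ^ (-β₂) with hF
  have hFnonneg : ∀ p, 0 ≤ F p := fun p => by positivity
  have hFmeas : Measurable F := by fun_prop
  have hmeas2 : Measurable fun p : EuclideanSpace ℝ (Fin n) × EuclideanSpace ℝ (Fin n) =>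
      ENNReal.ofReal (F p) := by fun_prop
  -- the key lintegral bound
  have key : ∫⁻ p : EuclideanSpace ℝ (Fin n) × EuclideanSpace ℝ (Fin n),
      ENNReal.ofReal (F p) ≤ CA * CB * ENNReal.ofReal (Real.sqrt (1 + ‖τ‖^2) ^ (-σ)) := by
    rw [Measure.volume_eq_prod, lintegral_prod _ hmeas2.aemeasurable]
    have hinner : ∀ x : EuclideanSpace ℝ (Fin n),
        ∫⁻ y : EuclideanSpace ℝ (Fin n), ENNReal.ofReal (F (x, y)) ≤
        CA * ENNReal.ofReal (Real.sqrt (1 + ‖x‖ ^ 2) ^ (-σ) *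
          Real.sqrt (1 + ‖x - τ‖ ^ 2) ^ (-β₁)) := by
      intro x
      have hpt : ∀ y : EuclideanSpace ℝ (Fin n), ENNReal.ofReal (F (x, y)) =
          ENNReal.ofReal (Real.sqrt (1 + ‖x - τ‖^2) ^ (-β₁)) *
          ENNReal.ofReal (‖y - x‖ ^ (-σ) * Real.sqrt (1 + ‖y‖^2) ^ (-β₂)) := fun y => by
        rw [← ENNReal.ofReal_mul (by positivity)]
        congr 1
        rw [hF]
        dsimp only
        rw [norm_sub_rev x y]
        ring
      calc ∫⁻ y : EuclideanSpace ℝ (Fin n), ENNReal.ofReal (F (x, y))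
          = ENNReal.ofReal (Real.sqrt (1 + ‖x - τ‖^2) ^ (-β₁)) *
            ∫⁻ y : EuclideanSpace ℝ (Fin n),
              ENNReal.ofReal (‖y - x‖ ^ (-σ) * Real.sqrt (1 + ‖y‖^2) ^ (-β₂)) := by
            simp_rw [hpt]
            exact lintegral_const_mul' _ _ ENNReal.ofReal_ne_top
        _ ≤ ENNReal.ofReal (Real.sqrt (1 + ‖x - τ‖^2) ^ (-β₁)) *
            (CA * ENNReal.ofReal (Real.sqrt (1 + ‖x‖ ^ 2) ^ (-σ))) :=
            mul_le_mul_right (hA x) _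
        _ = CA * ENNReal.ofReal (Real.sqrt (1 + ‖x‖ ^ 2) ^ (-σ) *
            Real.sqrt (1 + ‖x - τ‖ ^ 2) ^ (-β₁)) := by
            rw [ENNReal.ofReal_mul (by positivity)]
            ring
    calc ∫⁻ x, ∫⁻ y : EuclideanSpace ℝ (Fin n), ENNReal.ofReal (F (x, y))
        ≤ ∫⁻ x : EuclideanSpace ℝ (Fin n), CA * ENNReal.ofReal (Real.sqrt (1 + ‖x‖ ^ 2) ^ (-σ) *
            Real.sqrt (1 + ‖x - τ‖ ^ 2) ^ (-β₁)) := lintegral_mono hinner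
      _ = CA * ∫⁻ x : EuclideanSpace ℝ (Fin n), ENNReal.ofReal (Real.sqrt (1 + ‖x‖ ^ 2) ^ (-σ) *
            Real.sqrt (1 + ‖x - τ‖ ^ 2) ^ (-β₁)) := lintegral_const_mul' _ _ hCA
      _ ≤ CA * (CB * ENNReal.ofReal (Real.sqrt (1 + ‖τ‖^2) ^ (-σ))) :=
          mul_le_mul_right (hB τ) _
      _ = CA * CB * ENNReal.ofReal (Real.sqrt (1 + ‖τ‖^2) ^ (-σ)) := by ring
  have hne : CA * CB * ENNReal.ofReal (Real.sqrt (1 + ‖τ‖^2) ^ (-σ)) ≠ ∞ :=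
    ENNReal.mul_ne_top (ENNReal.mul_ne_top hCA hCB) ENNReal.ofReal_ne_top
  have hInt : Integrable F := by
    constructor
    · exact hFmeas.aestronglyMeasurable
    · rw [HasFiniteIntegral]
      have hnn : ∫⁻ p : EuclideanSpace ℝ (Fin n) × EuclideanSpace ℝ (Fin n), ‖F p‖ₑ =
          ∫⁻ p : EuclideanSpace ℝ (Fin n) × EuclideanSpace ℝ (Fin n), ENNReal.ofReal (F p) :=
        lintegral_enorm_of_nonneg hFnonneg
      rw [hnn]
      exact lt_of_le_of_lt key (lt_top_iff_ne_top.2 hne)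
  refine ⟨hInt, ?_⟩
  have hEq : (∫ p : EuclideanSpace ℝ (Fin n) × EuclideanSpace ℝ (Fin n), F p) =
      (∫⁻ p : EuclideanSpace ℝ (Fin n) × EuclideanSpace ℝ (Fin n),
        ENNReal.ofReal (F p)).toReal :=
    integral_eq_lintegral_of_nonneg_ae (ae_of_all _ hFnonneg)
      hFmeas.aestronglyMeasurable
  calc (∫ p : EuclideanSpace ℝ (Fin n) × EuclideanSpace ℝ (Fin n), F p)
      = (∫⁻ p : EuclideanSpace ℝ (Fin n) × EuclideanSpace ℝ (Fin n),
          ENNReal.ofReal (F p)).toReal := hEq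
    _ ≤ (CA * CB * ENNReal.ofReal (Real.sqrt (1 + ‖τ‖^2) ^ (-σ))).toReal :=
        ENNReal.toReal_mono hne key
    _ = (CA * CB).toReal * Real.sqrt (1 + ‖τ‖^2) ^ (-σ) := by
        rw [ENNReal.toReal_mul, ENNReal.toReal_ofReal (by positivity)]
    _ ≤ ((CA * CB).toReal + 1) * Real.sqrt (1 + ‖τ‖^2) ^ (-σ) := by
        refine mul_le_mul_of_nonneg_right (by linarith) (by positivity)
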